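/- If the tree metric t dominates the ground metric, i.e., d(x_i, y_j) ≤ t(u_i, v_j) for all support points, then the Flowtree estimate satisfies W₁(μ,ν) ≤ W̃₁(μ,ν) ≤ W₁ᵗ(μ,ν), where W₁ᵗ is the optimal transport cost in the tree metric. -/
import Mathlib


/-- `P` is a transport plan between probability vectors `μ` and `ν`. -/
def IsPlan {n m : ℕ} (μ : Fin n → ℝ) (ν : Fin m → ℝ) (P : Fin n → Fin m → ℝ) : Prop :=
  (∀ i j, 0 ≤ P i j) ∧ (∀ i, ∑ j, P i j = μ i) ∧ (∀ j, ∑ i, P i j = ν j)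

/-- If the tree metric dominates the ground metric, `d(xᵢ,yⱼ) ≤ t(uᵢ,vⱼ)`, then the
Flowtree estimate `W̃₁ = ∑ P̃ᵢⱼ d(xᵢ,yⱼ)` satisfies `W₁(μ,ν) ≤ W̃₁(μ,ν) ≤ W₁ᵗ(μ,ν)`,
where `W₁ᵗ(μ,ν) = ∑ P̃ᵢⱼ t(uᵢ,vⱼ)` is the optimal transport cost in the tree metric. -/
theorem stmt_7 (D n m : ℕ) (d : (Fin D → ℝ) → (Fin D → ℝ) → ℝ)
    (hd_nonneg : ∀ a b, 0 ≤ d a b)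
    (hd_eq : ∀ a b, d a b = 0 ↔ a = b)
    (hd_symm : ∀ a b, d a b = d b a)
    (hd_tri : ∀ a b c, d a c ≤ d a b + d b c)
    (x : Fin n → (Fin D → ℝ)) (y : Fin m → (Fin D → ℝ))
    (μ : Fin n → ℝ) (ν : Fin m → ℝ)
    (hμ0 : ∀ i, 0 ≤ μ i) (hν0 : ∀ j, 0 ≤ ν j)
    (hμ1 : ∑ i, μ i = 1) (hν1 : ∑ j, ν j = 1)
    (t : Fin n → Fin m → ℝ)  -- tree distances between corresponding leaves
    (hdom : ∀ i j, d (x i) (y j) ≤ t i j)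
    (Pt : Fin n → Fin m → ℝ) (hPt : IsPlan μ ν Pt)
    (hopt : ∀ Q, IsPlan μ ν Q →
      ∑ i, ∑ j, Pt i j * t i j ≤ ∑ i, ∑ j, Q i j * t i j) :
    sInf {c | ∃ P, IsPlan μ ν P ∧ c = ∑ i, ∑ j, P i j * d (x i) (y j)} ≤
      ∑ i, ∑ j, Pt i j * d (x i) (y j) ∧
    ∑ i, ∑ j, Pt i j * d (x i) (y j) ≤ ∑ i, ∑ j, Pt i j * t i j := by
  constructor
  · apply csInf_le
    · refine ⟨0, ?_⟩
      rintro c ⟨P, hP, rfl⟩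
      exact Finset.sum_nonneg fun i _ => Finset.sum_nonneg fun j _ =>
        mul_nonneg (hP.1 i j) (hd_nonneg _ _)
    · exact ⟨Pt, hPt, rfl⟩
  · exact Finset.sum_le_sum fun i _ => Finset.sum_le_sum fun j _ =>
      mul_le_mul_of_nonneg_left (hdom i j) (hPt.1 i j)
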